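/- The Poisson binomial PMF admits the discrete Fourier transform representation: $\Pr[S = k] = \frac{1}{N+1}\sum_{\ell=0}^{N} \mathcal{C}^{-k\ell}\prod_{n=1}^{N}\left[1 + (\mathcal{C}^{\ell}-1)(1-\mathfrak{p}_n)\right]$, where $\mathcal{C} = \exp\left(\frac{2\pi j}{N+1}\right)$ is a primitive $(N+1)$-th root of unity. -/

import Mathlib

open MeasureTheory ProbabilityTheory Finset Complex

lemma fourier_sum_aux (N : ℕ) (C : ℂ) (hprim : IsPrimitiveRoot C (N+1))
    (m k : ℕ) (hm : m ≤ N) (hk : k ≤ N) :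
    ∑ ℓ ∈ range (N + 1), C ^ (-(k * ℓ : ℤ)) * (C ^ ℓ) ^ m
      = if m = k then ((N:ℂ) + 1) else 0 := by
  have hC0 : C ≠ 0 := hprim.ne_zero (Nat.succ_ne_zero N)
  have hterm : ∀ ℓ ∈ range (N+1), C ^ (-(k * ℓ : ℤ)) * (C ^ ℓ) ^ m
      = (C ^ ((m:ℤ) - k)) ^ ℓ := by
    intro ℓ _
    rw [← zpow_natCast C ℓ, ← zpow_natCast (C ^ (ℓ:ℤ)) m, ← zpow_mul,
      ← zpow_natCast (C ^ ((m:ℤ) - (k:ℤ))) ℓ, ← zpow_mul, ← zpow_add₀ hC0]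
    ring_nf
  rw [Finset.sum_congr rfl hterm]
  by_cases hmk : m = k
  · subst hmk
    simp
  · rw [if_neg hmk]
    set z := C ^ ((m:ℤ) - k) with hz
    have hz1 : z ≠ 1 := by
      intro h
      have := (hprim.zpow_eq_one_iff_dvd _).mp h
      have := Int.eq_zero_of_dvd_of_natAbs_lt_natAbs this (by omega)
      omega
    rw [geom_sum_eq hz1]
    have : z ^ (N+1) = 1 := by
      rw [hz, ← zpow_natCast, ← zpow_mul, mul_comm, zpow_mul, zpow_natCast,
        hprim.pow_eq_one, one_zpow]
    rw [this]
    simp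

lemma indep_integral_mul_complex {Ω : Type*} [MeasurableSpace Ω] {μ : Measure Ω}
    [IsProbabilityMeasure μ] {X Y : Ω → ℂ} (h : IndepFun X Y μ)
    (hX : Integrable X μ) (hY : Integrable Y μ)
    (hXY : Integrable (fun ω => X ω * Y ω) μ) :
    ∫ ω, X ω * Y ω ∂μ = (∫ ω, X ω ∂μ) * ∫ ω, Y ω ∂μ := by
  have hXre : Integrable (fun ω => (X ω).re) μ := hX.re
  have hXim : Integrable (fun ω => (X ω).im) μ := hX.im
  have hYre : Integrable (fun ω => (Y ω).re) μ := hY.re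
  have hYim : Integrable (fun ω => (Y ω).im) μ := hY.im
  have hrr : IndepFun (fun ω => (X ω).re) (fun ω => (Y ω).re) μ :=
    h.comp Complex.measurable_re Complex.measurable_re
  have hri : IndepFun (fun ω => (X ω).re) (fun ω => (Y ω).im) μ :=
    h.comp Complex.measurable_re Complex.measurable_im
  have hir : IndepFun (fun ω => (X ω).im) (fun ω => (Y ω).re) μ :=
    h.comp Complex.measurable_im Complex.measurable_re
  have hii : IndepFun (fun ω => (X ω).im) (fun ω => (Y ω).im) μ :=
    h.comp Complex.measurable_im Complex.measurable_im
  have irr := hrr.integrable_mul hXre hYre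
  have iri := hri.integrable_mul hXre hYim
  have iir := hir.integrable_mul hXim hYre
  have iii := hii.integrable_mul hXim hYim
  have err := hrr.integral_mul_eq_mul_integral hXre.aestronglyMeasurable hYre.aestronglyMeasurable
  have eri := hri.integral_mul_eq_mul_integral hXre.aestronglyMeasurable hYim.aestronglyMeasurable
  have eir := hir.integral_mul_eq_mul_integral hXim.aestronglyMeasurable hYre.aestronglyMeasurable
  have eii := hii.integral_mul_eq_mul_integral hXim.aestronglyMeasurable hYim.aestronglyMeasurable
  simp only [Pi.mul_apply] at err eri eir eii
  have h1 := integral_re_add_im (𝕜 := ℂ) hXY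
  have h2 := integral_re_add_im (𝕜 := ℂ) hX
  have h3 := integral_re_add_im (𝕜 := ℂ) hY
  simp only [RCLike.re_to_complex, RCLike.im_to_complex, RCLike.I_to_complex] at h1 h2 h3
  rw [← h1, ← h2, ← h3]
  have hre : (fun ω => (X ω * Y ω).re)
      = fun ω => (X ω).re * (Y ω).re - (X ω).im * (Y ω).im := by
    funext ω; simp [Complex.mul_re]
  have him : (fun ω => (X ω * Y ω).im)
      = fun ω => (X ω).re * (Y ω).im + (X ω).im * (Y ω).re := by
    funext ω; simp [Complex.mul_im]
  have irr' : Integrable (fun ω => (X ω).re * (Y ω).re) μ := irr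
  have iri' : Integrable (fun ω => (X ω).re * (Y ω).im) μ := iri
  have iir' : Integrable (fun ω => (X ω).im * (Y ω).re) μ := iir
  have iii' : Integrable (fun ω => (X ω).im * (Y ω).im) μ := iii
  have err' : (∫ ω, (X ω).re * (Y ω).re ∂μ) = (∫ ω, (X ω).re ∂μ) * ∫ ω, (Y ω).re ∂μ := err
  have eri' : (∫ ω, (X ω).re * (Y ω).im ∂μ) = (∫ ω, (X ω).re ∂μ) * ∫ ω, (Y ω).im ∂μ := eri
  have eir' : (∫ ω, (X ω).im * (Y ω).re ∂μ) = (∫ ω, (X ω).im ∂μ) * ∫ ω, (Y ω).re ∂μ := eir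
  have eii' : (∫ ω, (X ω).im * (Y ω).im ∂μ) = (∫ ω, (X ω).im ∂μ) * ∫ ω, (Y ω).im ∂μ := eii
  rw [hre, him, integral_sub irr' iii', integral_add iri' iir', err', eii', eri', eir']
  push_cast
  ring_nf
  simp [Complex.I_sq]
  ring

lemma integral_prod_of_indep_aux {Ω ι : Type*} [MeasurableSpace Ω] (μ : Measure Ω)
    [IsProbabilityMeasure μ] (g : ι → Ω → ℂ) (hg : ∀ i, Measurable (g i))
    (hb : ∀ i ω, ‖g i ω‖ ≤ 1)
    (hind : iIndepFun g μ) (s : Finset ι) :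
    ∫ ω, ∏ i ∈ s, g i ω ∂μ = ∏ i ∈ s, ∫ ω, g i ω ∂μ := by
  classical
  have hint : ∀ t : Finset ι, Integrable (fun ω => ∏ i ∈ t, g i ω) μ := by
    intro t
    refine Integrable.mono' (integrable_const 1) ?_ (ae_of_all _ fun ω => ?_)
    · exact (Finset.measurable_prod t fun i _ => hg i).aestronglyMeasurable
    · rw [norm_prod]
      exact Finset.prod_le_one (fun i _ => norm_nonneg _) (fun i _ => hb i ω)
  induction s using Finset.cons_induction with
  | empty => simp
  | cons a t ha ih =>
    have hIndep : IndepFun (∏ j ∈ t, g j) (g a) μ :=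
      hind.indepFun_finsetProd_of_notMem hg ha
    have hIndep' : IndepFun (fun ω => ∏ j ∈ t, g j ω) (g a) μ := by
      convert hIndep using 1; funext ω; simp
    have hgaint : Integrable (g a) μ :=
      Integrable.mono' (integrable_const 1) (hg a).aestronglyMeasurable
        (ae_of_all _ fun ω => hb a ω)
    calc ∫ ω, ∏ i ∈ Finset.cons a t ha, g i ω ∂μ
        = ∫ ω, (∏ j ∈ t, g j ω) * g a ω ∂μ := by
          congr 1; funext ω; rw [Finset.prod_cons]; ring
      _ = (∫ ω, ∏ j ∈ t, g j ω ∂μ) * ∫ ω, g a ω ∂μ := by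
          refine indep_integral_mul_complex hIndep' (hint t) hgaint ?_
          refine Integrable.mono' (integrable_const 1) ?_ (ae_of_all _ fun ω => ?_)
          · exact ((Finset.measurable_prod t fun i _ => hg i).mul (hg a)).aestronglyMeasurable
          · rw [norm_mul, norm_prod]
            calc (∏ i ∈ t, ‖g i ω‖) * ‖g a ω‖
                ≤ 1 * 1 := by
                  refine mul_le_mul ?_ (hb a ω) (norm_nonneg _) zero_le_one
                  exact Finset.prod_le_one (fun i _ => norm_nonneg _) (fun i _ => hb i ω)
              _ = 1 := one_mul 1
      _ = (∏ j ∈ t, ∫ ω, g j ω ∂μ) * ∫ ω, g a ω ∂μ := by rw [ih]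
      _ = ∏ i ∈ Finset.cons a t ha, ∫ ω, g i ω ∂μ := by rw [Finset.prod_cons]; ring

/-- DFT representation of the Poisson binomial PMF:
`Pr[S = k] = (1/(N+1)) ∑_{ℓ=0}^{N} C^{-kℓ} ∏_{n=1}^{N} [1 + (C^ℓ - 1)(1 - p n)]`
where `C = exp(2πi/(N+1))`. -/
theorem stmt4 {Ω : Type*} [MeasurableSpace Ω] (μ : Measure Ω) [IsProbabilityMeasure μ]
    (N : ℕ) (hN : 1 ≤ N) (Z : Fin N → Ω → ℝ) (hmeas : ∀ n, Measurable (Z n))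
    (hval : ∀ n ω, Z n ω = 0 ∨ Z n ω = 1)
    (p : Fin N → ℝ) (hp : ∀ n, p n ∈ Set.Icc (0:ℝ) 1)
    (hind : iIndepFun Z μ)
    (hpz : ∀ n, μ {ω | Z n ω = 1} = ENNReal.ofReal (1 - p n))
    (k : ℕ) (hk : k ≤ N)
    (C : ℂ) (hC : C = Complex.exp (2 * Real.pi * Complex.I / (N + 1))) :
    ((μ {ω | ∑ n, Z n ω = (k : ℝ)}).toReal : ℂ)
      = (1 / (N + 1)) * ∑ ℓ ∈ range (N + 1),
          C ^ (-(k * ℓ : ℤ)) * ∏ n : Fin N, (1 + (C ^ ℓ - 1) * (1 - (p n : ℂ))) := by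
  classical
  have hprim : IsPrimitiveRoot C (N+1) := by
    rw [hC]
    have := Complex.isPrimitiveRoot_exp (N+1) (Nat.succ_ne_zero N)
    convert this using 2
    push_cast; ring
  have hC0 : C ≠ 0 := hprim.ne_zero (Nat.succ_ne_zero N)
  have habs : ‖C‖ = 1 := by
    rw [hC, Complex.norm_exp]
    have : (2 * (Real.pi:ℂ) * Complex.I / ((N:ℂ) + 1)).re = 0 := by
      simp [Complex.div_re, Complex.mul_re]
    rw [this, Real.exp_zero]
  have hnorm : ‖C‖ = 1 := habs
  -- the transformed variables
  set g : ℕ → Fin N → Ω → ℂ := fun ℓ n ω => 1 + (C ^ ℓ - 1) * (Z n ω : ℂ) with hg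
  have hgmeas : ∀ ℓ n, Measurable (g ℓ n) := fun ℓ n =>
    measurable_const.add (measurable_const.mul (Complex.measurable_ofReal.comp (hmeas n)))
  have hgval : ∀ ℓ n ω, g ℓ n ω = 1 ∨ g ℓ n ω = C ^ ℓ := by
    intro ℓ n ω
    rcases hval n ω with h | h
    · left; simp [hg, h]
    · right; simp [hg, h]
  have hgnorm : ∀ ℓ n ω, ‖g ℓ n ω‖ = 1 := by
    intro ℓ n ω
    rcases hgval ℓ n ω with h | h <;> rw [h] <;> simp [norm_pow, hnorm]
  have hgind : ∀ ℓ, iIndepFun (g ℓ) μ := by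
    intro ℓ
    exact hind.comp (fun n x => 1 + (C ^ ℓ - 1) * (x : ℂ))
      (fun n => measurable_const.add (measurable_const.mul Complex.measurable_ofReal))
  -- expectation of each g
  have hZint : ∀ n, Integrable (fun ω => (Z n ω : ℂ)) μ := by
    intro n
    refine Integrable.mono' (integrable_const 1)
      (Complex.measurable_ofReal.comp (hmeas n)).aestronglyMeasurable
      (ae_of_all _ fun ω => ?_)
    rcases hval n ω with h | h <;> simp [h]
  have hEZ : ∀ n, ∫ ω, (Z n ω : ℂ) ∂μ = ((1 - p n : ℝ) : ℂ) := by
    intro n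
    have hr : ∫ ω, Z n ω ∂μ = 1 - p n := by
      have hZind : Z n = Set.indicator {ω | Z n ω = 1} (fun _ => (1:ℝ)) := by
        funext ω
        by_cases h : Z n ω = 1
        · simp only [Set.indicator, Set.mem_setOf_eq, h, if_true]
        · simp only [Set.indicator, Set.mem_setOf_eq, h, if_false]
          exact (hval n ω).resolve_right h
      have hms : MeasurableSet {ω | Z n ω = 1} := by
        have : {ω | Z n ω = 1} = Z n ⁻¹' {1} := rfl
        rw [this]
        exact (hmeas n) (measurableSet_singleton 1)
      rw [hZind, integral_indicator_const (1:ℝ) hms, measureReal_def, hpz n, smul_eq_mul, mul_one,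
        ENNReal.toReal_ofReal (by linarith [(hp n).2])]
    have cc : ∀ r : ℝ, (r : ℂ) = @RCLike.ofReal ℂ _ r := fun r => rfl
    simp only [cc]
    rw [integral_ofReal, hr]
  have hEg : ∀ ℓ n, ∫ ω, g ℓ n ω ∂μ = 1 + (C ^ ℓ - 1) * (1 - (p n : ℂ)) := by
    intro ℓ n
    have : ∫ ω, g ℓ n ω ∂μ
        = ∫ ω, (1 : ℂ) + (C ^ ℓ - 1) * (Z n ω : ℂ) ∂μ := rfl
    rw [this, integral_add (integrable_const 1) ((hZint n).const_mul _),
      integral_const, integral_const_mul, hEZ n]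
    push_cast
    simp
  -- integrability of summands
  have hintg : ∀ ℓ : ℕ, Integrable (fun ω => C ^ (-(k * ℓ : ℤ)) * ∏ n : Fin N, g ℓ n ω) μ := by
    intro ℓ
    refine Integrable.mono' (integrable_const 1) ?_ (ae_of_all _ fun ω => ?_)
    · exact (measurable_const.mul
        (Finset.measurable_prod univ fun n _ => hgmeas ℓ n)).aestronglyMeasurable
    · rw [norm_mul, norm_prod, norm_zpow, hnorm]
      simp [hgnorm ℓ]
  -- counting function
  set cnt : Ω → ℕ := fun ω => (univ.filter (fun n => Z n ω = 1)).card with hcnt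
  have hsum : ∀ ω, ∑ n, Z n ω = (cnt ω : ℝ) := by
    intro ω
    rw [← Finset.sum_filter_add_sum_filter_not univ (fun n => Z n ω = 1)]
    rw [Finset.sum_congr rfl (fun n hn => (Finset.mem_filter.mp hn).2),
      Finset.sum_const, Finset.sum_congr rfl
        (fun n hn => (hval n ω).resolve_right (Finset.mem_filter.mp hn).2),
      Finset.sum_const]
    simp [hcnt]
  have hprodg : ∀ ℓ ω, ∏ n : Fin N, g ℓ n ω = (C ^ ℓ) ^ (cnt ω) := by
    intro ℓ ω
    rw [← Finset.prod_filter_mul_prod_filter_not univ (fun n => Z n ω = 1)]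
    rw [Finset.prod_congr rfl (fun n hn => show g ℓ n ω = C ^ ℓ by
        simp [hg, (Finset.mem_filter.mp hn).2]),
      Finset.prod_const,
      Finset.prod_congr rfl (fun n hn => show g ℓ n ω = 1 by
        simp [hg, (hval n ω).resolve_right (Finset.mem_filter.mp hn).2]),
      Finset.prod_const]
    simp [hcnt]
  have hcnt_le : ∀ ω, cnt ω ≤ N := by
    intro ω
    calc cnt ω ≤ (univ : Finset (Fin N)).card := Finset.card_filter_le _ _
      _ = N := by simp
  -- the event set
  set S : Set Ω := {ω | ∑ n, Z n ω = (k : ℝ)} with hSdef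
  have hS_meas : MeasurableSet S := by
    have : S = (fun ω => ∑ n, Z n ω) ⁻¹' {(k:ℝ)} := rfl
    rw [this]
    exact (Finset.measurable_sum univ fun n _ => hmeas n) (measurableSet_singleton _)
  have hSeq : ∀ ω, ω ∈ S ↔ cnt ω = k := by
    intro ω
    rw [hSdef]
    simp only [Set.mem_setOf_eq, hsum ω]
    exact_mod_cast Nat.cast_inj
  -- main computation
  have key : ∑ ℓ ∈ range (N + 1),
      C ^ (-(k * ℓ : ℤ)) * ∏ n : Fin N, (1 + (C ^ ℓ - 1) * (1 - (p n : ℂ)))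
      = ((N:ℂ) + 1) * ((μ S).toReal : ℂ) := by
    calc ∑ ℓ ∈ range (N + 1),
        C ^ (-(k * ℓ : ℤ)) * ∏ n : Fin N, (1 + (C ^ ℓ - 1) * (1 - (p n : ℂ)))
        = ∑ ℓ ∈ range (N + 1), C ^ (-(k * ℓ : ℤ)) * ∏ n : Fin N, ∫ ω, g ℓ n ω ∂μ := by
          refine Finset.sum_congr rfl fun ℓ _ => ?_
          congr 1
          exact Finset.prod_congr rfl fun n _ => (hEg ℓ n).symm
      _ = ∑ ℓ ∈ range (N + 1), C ^ (-(k * ℓ : ℤ)) * ∫ ω, ∏ n : Fin N, g ℓ n ω ∂μ := by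
          refine Finset.sum_congr rfl fun ℓ _ => ?_
          rw [integral_prod_of_indep_aux μ (g ℓ) (hgmeas ℓ)
            (fun n ω => le_of_eq (hgnorm ℓ n ω)) (hgind ℓ) univ]
      _ = ∑ ℓ ∈ range (N + 1), ∫ ω, C ^ (-(k * ℓ : ℤ)) * ∏ n : Fin N, g ℓ n ω ∂μ := by
          refine Finset.sum_congr rfl fun ℓ _ => ?_
          rw [integral_const_mul]
      _ = ∫ ω, ∑ ℓ ∈ range (N + 1), C ^ (-(k * ℓ : ℤ)) * ∏ n : Fin N, g ℓ n ω ∂μ := by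
          rw [integral_finset_sum _ (fun ℓ _ => hintg ℓ)]
      _ = ∫ ω, S.indicator (fun _ => ((N:ℂ) + 1)) ω ∂μ := by
          refine integral_congr_ae (ae_of_all _ fun ω => ?_)
          have : ∑ ℓ ∈ range (N + 1), C ^ (-(k * ℓ : ℤ)) * ∏ n : Fin N, g ℓ n ω
              = if cnt ω = k then ((N:ℂ) + 1) else 0 := by
            rw [Finset.sum_congr rfl (fun ℓ _ => by rw [hprodg ℓ ω])]
            exact fourier_sum_aux N C hprim (cnt ω) k (hcnt_le ω) hk
          beta_reduce
          rw [this]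
          by_cases h : ω ∈ S
          · rw [if_pos ((hSeq ω).mp h), Set.indicator_of_mem h]
          · rw [if_neg (fun hc => h ((hSeq ω).mpr hc)), Set.indicator_of_notMem h]
      _ = ((N:ℂ) + 1) * ((μ S).toReal : ℂ) := by
          rw [integral_indicator_const _ hS_meas]
          simp only [measureReal_def, smul_eq_mul, mul_one, Complex.real_smul]
          ring
  rw [key]
  have hne : ((N:ℂ) + 1) ≠ 0 := by
    intro h
    have : ((N:ℂ) + 1) = ((N + 1 : ℕ) : ℂ) := by push_cast; ring
    rw [this] at h
    exact Nat.cast_ne_zero.mpr (Nat.succ_ne_zero N) h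
  field_simp
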